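/- Let C be a 2-identifying code in the hexagonal grid G_H, and let c ∈ C satisfy I_2(C;c) = {c} (i.e., c is the unique codeword within distance 2 of itself). If at least two of the three vertices c + (−2,1), c + (2,1), c + (0,−1) (for c of the parity where c is adjacent to c + (0,1)) belong to C, then s_2(C;c) ≤ 14/3. -/

import Mathlib

def hexGraph : SimpleGraph (ℤ × ℤ) where
  Adj u v := (u.2 = v.2 ∧ (u.1 = v.1 + 1 ∨ u.1 = v.1 - 1)) ∨
    (u.1 = v.1 ∧ (((u.1 + u.2) % 2 = 0 ∧ u.2 = v.2 - 1) ∨ ((u.1 + u.2) % 2 ≠ 0 ∧ u.2 = v.2 + 1)))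
  symm := ⟨by rintro ⟨a, b⟩ ⟨c, d⟩ h; dsimp only at *; omega⟩
  loopless := ⟨by rintro ⟨a, b⟩ h; dsimp only at h; omega⟩

def hexBall (r : ℕ) (u : ℤ × ℤ) : Set (ℤ × ℤ) := {x | hexGraph.dist u x ≤ r}

def I2 (C : Set (ℤ × ℤ)) (u : ℤ × ℤ) : Set (ℤ × ℤ) := hexBall 2 u ∩ C

def isIdentifying2 (C : Set (ℤ × ℤ)) : Prop :=
  ∀ u : ℤ × ℤ, (I2 C u).Nonempty ∧ ∀ v : ℤ × ℤ, u ≠ v → I2 C u ≠ I2 C v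

noncomputable def share2 (C : Set (ℤ × ℤ)) (c : ℤ × ℤ) : ℝ :=
  ∑' u : (hexBall 2 c), 1 / ((I2 C ↑u).ncard : ℝ)

def Q (n : ℕ) : Set (ℤ × ℤ) := {p | |p.1| ≤ (n : ℤ) ∧ |p.2| ≤ (n : ℤ)}

noncomputable def density (C : Set (ℤ × ℤ)) : ℝ :=
  Filter.limsup (fun n : ℕ => ((C ∩ Q n).ncard : ℝ) / ((Q n).ncard : ℝ)) Filter.atTop

-- auxiliary lemmas

lemma hexAdj_iff (a b c d : ℤ) : hexGraph.Adj (a, b) (c, d) ↔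
    ((b = d ∧ (a = c + 1 ∨ a = c - 1)) ∨
    (a = c ∧ (((a + b) % 2 = 0 ∧ b = d - 1) ∨ ((a + b) % 2 ≠ 0 ∧ b = d + 1)))) := Iff.rfl

lemma adj_mk {a b c d : ℤ} (h : (b = d ∧ (a = c + 1 ∨ a = c - 1)) ∨
    (a = c ∧ (((a + b) % 2 = 0 ∧ b = d - 1) ∨ ((a + b) % 2 ≠ 0 ∧ b = d + 1)))) :
    hexGraph.Adj (a, b) (c, d) := h

lemma hex_dist_le_one {u v : ℤ × ℤ} (h : hexGraph.Adj u v) : hexGraph.dist u v ≤ 1 := by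
  simpa using SimpleGraph.dist_le (SimpleGraph.Walk.cons h SimpleGraph.Walk.nil)

lemma hex_dist_le_two {u w v : ℤ × ℤ} (h1 : hexGraph.Adj u w) (h2 : hexGraph.Adj w v) :
    hexGraph.dist u v ≤ 2 := by
  simpa using SimpleGraph.dist_le
    (SimpleGraph.Walk.cons h1 (SimpleGraph.Walk.cons h2 SimpleGraph.Walk.nil))

lemma reach_right (i j : ℤ) : hexGraph.Reachable (i, j) (i + 1, j) :=
  (adj_mk (by omega)).reachable

lemma reach_up (i j : ℤ) : hexGraph.Reachable (i, j) (i, j + 1) := by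
  by_cases h : (i + j) % 2 = 0
  · exact (adj_mk (by omega)).reachable
  · exact ((adj_mk (a := i) (b := j) (c := i+1) (d := j) (by omega)).reachable.trans
      ((adj_mk (a := i+1) (b := j) (c := i+1) (d := j+1) (by omega)).reachable)).trans
      ((adj_mk (a := i+1) (b := j+1) (c := i) (d := j+1) (by omega)).reachable)

lemma reach_origin (p : ℤ × ℤ) : hexGraph.Reachable ((0 : ℤ), (0 : ℤ)) p := by
  obtain ⟨i, j⟩ := p
  have hx : ∀ i : ℤ, hexGraph.Reachable ((0 : ℤ), (0 : ℤ)) (i, 0) := by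
    intro i
    induction i using Int.induction_on with
    | zero => exact SimpleGraph.Reachable.refl _
    | succ k ih => exact ih.trans (reach_right k 0)
    | pred k ih =>
        refine ih.trans ?_
        have h := (reach_right (-(k : ℤ) - 1) 0).symm
        rw [show (-(k : ℤ) - 1 + 1) = -(k : ℤ) by ring] at h
        exact h
  have hy : ∀ j : ℤ, hexGraph.Reachable (i, 0) (i, j) := by
    intro j
    induction j using Int.induction_on with
    | zero => exact SimpleGraph.Reachable.refl _
    | succ k ih => exact ih.trans (reach_up i k)
    | pred k ih =>
        refine ih.trans ?_
        have h := (reach_up i (-(k : ℤ) - 1)).symm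
        rw [show (-(k : ℤ) - 1 + 1) = -(k : ℤ) by ring] at h
        exact h
  exact (hx i).trans (hy j)

instance : DecidableRel hexGraph.Adj := fun u v =>
  decidable_of_iff ((u.2 = v.2 ∧ (u.1 = v.1 + 1 ∨ u.1 = v.1 - 1)) ∨
    (u.1 = v.1 ∧ (((u.1 + u.2) % 2 = 0 ∧ u.2 = v.2 - 1) ∨ ((u.1 + u.2) % 2 ≠ 0 ∧ u.2 = v.2 + 1))))
    Iff.rfl

def hexF : Finset (ℤ × ℤ) :=
  {((0:ℤ),(0:ℤ)), (1,0), (-1,0), (0,1), (2,0), (-2,0), (1,-1), (-1,-1), (1,1), (-1,1)}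


lemma nbr0 {w1 w2 : ℤ} (h : hexGraph.Adj (0,0) (w1,w2)) :
    (w1 = 1 ∧ w2 = 0) ∨ (w1 = -1 ∧ w2 = 0) ∨ (w1 = 0 ∧ w2 = 1) := by
  rw [hexAdj_iff] at h; omega

lemma nbrR {x1 x2 : ℤ} (h : hexGraph.Adj (1,0) (x1,x2)) :
    (x1 = 2 ∧ x2 = 0) ∨ (x1 = 0 ∧ x2 = 0) ∨ (x1 = 1 ∧ x2 = -1) := by
  rw [hexAdj_iff] at h; omega

lemma nbrL {x1 x2 : ℤ} (h : hexGraph.Adj (-1,0) (x1,x2)) :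
    (x1 = 0 ∧ x2 = 0) ∨ (x1 = -2 ∧ x2 = 0) ∨ (x1 = -1 ∧ x2 = -1) := by
  rw [hexAdj_iff] at h; omega

lemma nbrU {x1 x2 : ℤ} (h : hexGraph.Adj (0,1) (x1,x2)) :
    (x1 = 1 ∧ x2 = 1) ∨ (x1 = -1 ∧ x2 = 1) ∨ (x1 = 0 ∧ x2 = 0) := by
  rw [hexAdj_iff] at h; omega

lemma hexBall_eq : hexBall 2 ((0:ℤ),(0:ℤ)) = (hexF : Set (ℤ × ℤ)) := by
  ext x
  constructor
  · intro hx
    obtain ⟨x1, x2⟩ := x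
    have hr := reach_origin (x1, x2)
    obtain ⟨p, hp⟩ := hr.exists_walk_length_eq_dist
    have hlen : p.length ≤ 2 := hp.le.trans hx
    clear hp hx hr
    simp only [hexF, Finset.coe_insert, Finset.coe_singleton, Set.mem_insert_iff,
      Set.mem_singleton_iff, Prod.mk.injEq]
    cases p with
    | nil => norm_num
    | cons h q =>
      cases q with
      | nil =>
        rcases nbr0 h with ⟨rfl, rfl⟩|⟨rfl, rfl⟩|⟨rfl, rfl⟩ <;> norm_num
      | cons h2 r =>
        cases r with
        | nil =>
          rename_i w
          obtain ⟨w1, w2⟩ := w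
          rcases nbr0 h with ⟨rfl, rfl⟩|⟨rfl, rfl⟩|⟨rfl, rfl⟩
          · rcases nbrR h2 with ⟨rfl, rfl⟩|⟨rfl, rfl⟩|⟨rfl, rfl⟩ <;> norm_num
          · rcases nbrL h2 with ⟨rfl, rfl⟩|⟨rfl, rfl⟩|⟨rfl, rfl⟩ <;> norm_num
          · rcases nbrU h2 with ⟨rfl, rfl⟩|⟨rfl, rfl⟩|⟨rfl, rfl⟩ <;> norm_num
        | cons h3 r' =>
          exfalso
          simp only [SimpleGraph.Walk.length_cons] at hlen
          omega
  · intro hx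
    simp only [hexF, Finset.coe_insert, Finset.coe_singleton, Set.mem_insert_iff,
      Set.mem_singleton_iff] at hx
    rcases hx with h|h|h|h|h|h|h|h|h|h <;> subst h <;>
      show hexGraph.dist _ _ ≤ 2
    · simp [SimpleGraph.dist_self]
    · exact (hex_dist_le_one (by decide)).trans one_le_two
    · exact (hex_dist_le_one (by decide)).trans one_le_two
    · exact (hex_dist_le_one (by decide)).trans one_le_two
    · exact hex_dist_le_two (w := (1,0)) (by decide) (by decide)
    · exact hex_dist_le_two (w := (-1,0)) (by decide) (by decide)
    · exact hex_dist_le_two (w := (1,0)) (by decide) (by decide)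
    · exact hex_dist_le_two (w := (-1,0)) (by decide) (by decide)
    · exact hex_dist_le_two (w := (0,1)) (by decide) (by decide)
    · exact hex_dist_le_two (w := (0,1)) (by decide) (by decide)

lemma mem_I2 {C : Set (ℤ × ℤ)} {u z : ℤ × ℤ} (h1 : hexGraph.dist u z ≤ 2) (h2 : z ∈ C) :
    z ∈ I2 C u := ⟨h1, h2⟩

lemma inv_ncard_le_half {S : Set (ℤ × ℤ)} {a b : ℤ × ℤ} (hne : a ≠ b) (ha : a ∈ S)
    (hb : b ∈ S) : 1 / (S.ncard : ℝ) ≤ 1 / 2 := by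
  by_cases hfin : S.Finite
  · have hsub : ({a, b} : Set (ℤ × ℤ)) ⊆ S :=
      Set.insert_subset_iff.mpr ⟨ha, Set.singleton_subset_iff.mpr hb⟩
    have h2 : 2 ≤ S.ncard := by
      have := Set.ncard_le_ncard hsub hfin
      rwa [Set.ncard_pair hne] at this
    exact one_div_le_one_div_of_le (by norm_num) (by exact_mod_cast h2)
  · rw [Set.Infinite.ncard hfin]
    norm_num

lemma inv_ncard_le_third {S : Set (ℤ × ℤ)} {a b c : ℤ × ℤ} (hab : a ≠ b) (hac : a ≠ c)
    (hbc : b ≠ c) (ha : a ∈ S) (hb : b ∈ S) (hc : c ∈ S) : 1 / (S.ncard : ℝ) ≤ 1 / 3 := by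
  by_cases hfin : S.Finite
  · have hsub : ({a, b, c} : Set (ℤ × ℤ)) ⊆ S :=
      Set.insert_subset_iff.mpr ⟨ha,
        Set.insert_subset_iff.mpr ⟨hb, Set.singleton_subset_iff.mpr hc⟩⟩
    have h3 : 3 ≤ S.ncard := by
      have h := Set.ncard_le_ncard hsub hfin
      rwa [Set.ncard_eq_three.mpr ⟨a, b, c, hab, hac, hbc, rfl⟩] at h
    exact one_div_le_one_div_of_le (by norm_num) (by exact_mod_cast h3)
  · rw [Set.Infinite.ncard hfin]
    norm_num

lemma t_le_half {C : Set (ℤ × ℤ)} (hC : isIdentifying2 C)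
    (hI : I2 C ((0 : ℤ), (0 : ℤ)) = {((0 : ℤ), (0 : ℤ))}) {p : ℤ × ℤ}
    (hp : p ≠ ((0 : ℤ), (0 : ℤ))) (hcp : ((0 : ℤ), (0 : ℤ)) ∈ I2 C p) :
    1 / ((I2 C p).ncard : ℝ) ≤ 1 / 2 := by
  have hsnd : ∃ z ∈ I2 C p, z ≠ ((0 : ℤ), (0 : ℤ)) := by
    by_contra hno
    push_neg at hno
    exact ((hC p).2 ((0 : ℤ), (0 : ℤ)) hp)
      (by rw [hI]; exact Set.eq_singleton_iff_unique_mem.mpr ⟨hcp, hno⟩)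
  obtain ⟨z, hz, hzne⟩ := hsnd
  exact inv_ncard_le_half (Ne.symm hzne) hcp hz

lemma excl {C : Set (ℤ × ℤ)} (hC : isIdentifying2 C) {u v x : ℤ × ℤ} (huv : u ≠ v)
    (hx : x ≠ ((0 : ℤ), (0 : ℤ)))
    (hcu : ((0 : ℤ), (0 : ℤ)) ∈ I2 C u) (hxu : x ∈ I2 C u)
    (hcv : ((0 : ℤ), (0 : ℤ)) ∈ I2 C v) (hxv : x ∈ I2 C v) :
    1 / ((I2 C u).ncard : ℝ) ≤ 1 / 3 ∨ 1 / ((I2 C v).ncard : ℝ) ≤ 1 / 3 := by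
  by_contra hcon
  push_neg at hcon
  have key : ∀ w, ((0 : ℤ), (0 : ℤ)) ∈ I2 C w → x ∈ I2 C w →
      (1 / 3 : ℝ) < 1 / ((I2 C w).ncard : ℝ) → I2 C w = {((0 : ℤ), (0 : ℤ)), x} := by
    intro w hcw hxw hw
    have hw' : ¬ (1 / ((I2 C w).ncard : ℝ) ≤ 1 / 3) := not_le.mpr hw
    have hfin : (I2 C w).Finite := by
      by_contra hinf
      exact hw' (by rw [Set.Infinite.ncard hinf]; norm_num)
    have hsub : ({((0 : ℤ), (0 : ℤ)), x} : Set (ℤ × ℤ)) ⊆ I2 C w :=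
      Set.insert_subset_iff.mpr ⟨hcw, Set.singleton_subset_iff.mpr hxw⟩
    have hle : (I2 C w).ncard ≤ 2 := by
      by_contra hgt
      push_neg at hgt
      have h3 : 3 ≤ (I2 C w).ncard := hgt
      exact hw' (one_div_le_one_div_of_le (by norm_num) (by exact_mod_cast h3))
    exact (Set.eq_of_subset_of_ncard_le hsub
      (by rw [Set.ncard_pair (Ne.symm hx)]; exact hle) hfin).symm
  exact (hC u).2 v huv ((key u hcu hxu hcon.1).trans (key v hcv hxv hcon.2).symm)

lemma tri {x y z : ℝ} (hx : x ≤ 1/2) (hy : y ≤ 1/2) (hz : z ≤ 1/2)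
    (hxy : x ≤ 1/3 ∨ y ≤ 1/3) (hxz : x ≤ 1/3 ∨ z ≤ 1/3) (hyz : y ≤ 1/3 ∨ z ≤ 1/3) :
    x + y + z ≤ 7/6 := by
  rcases hxy with h|h <;> rcases hxz with h'|h' <;> rcases hyz with h''|h'' <;> linarith

theorem stmt9 (C : Set (ℤ × ℤ)) (hC : isIdentifying2 C)
    (hc : ((0 : ℤ), (0 : ℤ)) ∈ C)
    (hI : I2 C ((0 : ℤ), (0 : ℤ)) = {((0 : ℤ), (0 : ℤ))})
    (htwo : 2 ≤ (({((-2 : ℤ), (1 : ℤ)), (2, 1), (0, -1)} : Set (ℤ × ℤ)) ∩ C).ncard) :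
    share2 C ((0 : ℤ), (0 : ℤ)) ≤ 14 / 3 := by
  classical
  -- expand the share as a finite sum over the ball
  have h1 : share2 C ((0 : ℤ), (0 : ℤ)) =
      ∑ p ∈ hexF, 1 / ((I2 C p).ncard : ℝ) := by
    unfold share2
    rw [hexBall_eq]
    exact Finset.tsum_subtype' hexF (fun p => 1 / ((I2 C p).ncard : ℝ))
  rw [h1]
  simp only [hexF]
  rw [Finset.sum_insert (by decide), Finset.sum_insert (by decide),
    Finset.sum_insert (by decide), Finset.sum_insert (by decide),
    Finset.sum_insert (by decide), Finset.sum_insert (by decide),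
    Finset.sum_insert (by decide), Finset.sum_insert (by decide),
    Finset.sum_insert (by decide), Finset.sum_singleton]
  -- center term
  have ht0 : 1 / ((I2 C ((0 : ℤ), (0 : ℤ))).ncard : ℝ) = 1 := by
    rw [hI, Set.ncard_singleton]
    norm_num
  -- distances from the nine other ball points back to the center
  have dc1 : ((0:ℤ),(0:ℤ)) ∈ I2 C ((1:ℤ),(0:ℤ)) :=
    mem_I2 ((hex_dist_le_one (by decide)).trans one_le_two) hc
  have dc2 : ((0:ℤ),(0:ℤ)) ∈ I2 C ((-1:ℤ),(0:ℤ)) :=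
    mem_I2 ((hex_dist_le_one (by decide)).trans one_le_two) hc
  have dc3 : ((0:ℤ),(0:ℤ)) ∈ I2 C ((0:ℤ),(1:ℤ)) :=
    mem_I2 ((hex_dist_le_one (by decide)).trans one_le_two) hc
  have dc4 : ((0:ℤ),(0:ℤ)) ∈ I2 C ((2:ℤ),(0:ℤ)) :=
    mem_I2 (hex_dist_le_two (w := (1,0)) (by decide) (by decide)) hc
  have dc5 : ((0:ℤ),(0:ℤ)) ∈ I2 C ((-2:ℤ),(0:ℤ)) :=
    mem_I2 (hex_dist_le_two (w := (-1,0)) (by decide) (by decide)) hc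
  have dc6 : ((0:ℤ),(0:ℤ)) ∈ I2 C ((1:ℤ),(-1:ℤ)) :=
    mem_I2 (hex_dist_le_two (w := (1,0)) (by decide) (by decide)) hc
  have dc7 : ((0:ℤ),(0:ℤ)) ∈ I2 C ((-1:ℤ),(-1:ℤ)) :=
    mem_I2 (hex_dist_le_two (w := (-1,0)) (by decide) (by decide)) hc
  have dc8 : ((0:ℤ),(0:ℤ)) ∈ I2 C ((1:ℤ),(1:ℤ)) :=
    mem_I2 (hex_dist_le_two (w := (0,1)) (by decide) (by decide)) hc
  have dc9 : ((0:ℤ),(0:ℤ)) ∈ I2 C ((-1:ℤ),(1:ℤ)) :=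
    mem_I2 (hex_dist_le_two (w := (0,1)) (by decide) (by decide)) hc
  -- 1/2 bounds for all nine
  have hh1 := t_le_half hC hI (by decide) dc1
  have hh2 := t_le_half hC hI (by decide) dc2
  have hh3 := t_le_half hC hI (by decide) dc3
  have hh4 := t_le_half hC hI (by decide) dc4
  have hh5 := t_le_half hC hI (by decide) dc5
  have hh6 := t_le_half hC hI (by decide) dc6
  have hh7 := t_le_half hC hI (by decide) dc7
  have hh8 := t_le_half hC hI (by decide) dc8
  have hh9 := t_le_half hC hI (by decide) dc9
  -- which two of the three outer codewords are present
  have hcases : (((2:ℤ),(1:ℤ)) ∈ C ∧ ((0:ℤ),(-1:ℤ)) ∈ C) ∨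
      (((-2:ℤ),(1:ℤ)) ∈ C ∧ ((0:ℤ),(-1:ℤ)) ∈ C) ∨
      (((-2:ℤ),(1:ℤ)) ∈ C ∧ ((2:ℤ),(1:ℤ)) ∈ C) := by
    have hsubs : ∀ s : ℤ × ℤ,
        (({((-2 : ℤ), (1 : ℤ)), (2, 1), (0, -1)} : Set (ℤ × ℤ)) ∩ C) ⊆ {s} → False := by
      intro s hsub
      have h := Set.ncard_le_ncard hsub (Set.finite_singleton s)
      rw [Set.ncard_singleton] at h
      omega
    by_cases e1 : ((-2:ℤ),(1:ℤ)) ∈ C <;> by_cases e2 : ((2:ℤ),(1:ℤ)) ∈ C <;>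
      by_cases e3 : ((0:ℤ),(-1:ℤ)) ∈ C
    · exact Or.inr (Or.inr ⟨e1, e2⟩)
    · exact Or.inr (Or.inr ⟨e1, e2⟩)
    · exact Or.inr (Or.inl ⟨e1, e3⟩)
    · exact (hsubs ((-2:ℤ),(1:ℤ)) (by
          rintro z ⟨hz1, hz2⟩
          simp only [Set.mem_insert_iff, Set.mem_singleton_iff] at hz1 ⊢
          rcases hz1 with rfl|rfl|rfl
          · rfl
          · exact absurd hz2 e2
          · exact absurd hz2 e3)).elim
    · exact Or.inl ⟨e2, e3⟩
    · exact (hsubs ((2:ℤ),(1:ℤ)) (by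
          rintro z ⟨hz1, hz2⟩
          simp only [Set.mem_insert_iff, Set.mem_singleton_iff] at hz1 ⊢
          rcases hz1 with rfl|rfl|rfl
          · exact absurd hz2 e1
          · rfl
          · exact absurd hz2 e3)).elim
    · exact (hsubs ((0:ℤ),(-1:ℤ)) (by
          rintro z ⟨hz1, hz2⟩
          simp only [Set.mem_insert_iff, Set.mem_singleton_iff] at hz1 ⊢
          rcases hz1 with rfl|rfl|rfl
          · exact absurd hz2 e1
          · exact absurd hz2 e2
          · rfl)).elim
    · exact (hsubs ((0:ℤ),(-1:ℤ)) (by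
          rintro z ⟨hz1, hz2⟩
          simp only [Set.mem_insert_iff, Set.mem_singleton_iff] at hz1 ⊢
          rcases hz1 with rfl|rfl|rfl
          · exact absurd hz2 e1
          · exact absurd hz2 e2
          · exact absurd hz2 e3)).elim
  rcases hcases with ⟨hy, hx⟩ | ⟨hy, hx⟩ | ⟨hy, hx⟩
  · -- x = (0,-1) ∈ C, y = (2,1) ∈ C
    -- x-memberships
    have mx1 : ((0:ℤ),(-1:ℤ)) ∈ I2 C ((1:ℤ),(0:ℤ)) :=
      mem_I2 (hex_dist_le_two (w := (1,-1)) (by decide) (by decide)) hx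
    have mx2 : ((0:ℤ),(-1:ℤ)) ∈ I2 C ((-1:ℤ),(0:ℤ)) :=
      mem_I2 (hex_dist_le_two (w := (-1,-1)) (by decide) (by decide)) hx
    have mx3 : ((0:ℤ),(-1:ℤ)) ∈ I2 C ((1:ℤ),(-1:ℤ)) :=
      mem_I2 ((hex_dist_le_one (by decide)).trans one_le_two) hx
    have mx4 : ((0:ℤ),(-1:ℤ)) ∈ I2 C ((-1:ℤ),(-1:ℤ)) :=
      mem_I2 ((hex_dist_le_one (by decide)).trans one_le_two) hx
    -- y-memberships
    have my1 : ((2:ℤ),(1:ℤ)) ∈ I2 C ((2:ℤ),(0:ℤ)) :=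
      mem_I2 ((hex_dist_le_one (by decide)).trans one_le_two) hy
    have my2 : ((2:ℤ),(1:ℤ)) ∈ I2 C ((1:ℤ),(1:ℤ)) :=
      mem_I2 ((hex_dist_le_one (by decide)).trans one_le_two) hy
    have my3 : ((2:ℤ),(1:ℤ)) ∈ I2 C ((0:ℤ),(1:ℤ)) :=
      mem_I2 (hex_dist_le_two (w := (1,1)) (by decide) (by decide)) hy
    have my4 : ((2:ℤ),(1:ℤ)) ∈ I2 C ((1:ℤ),(0:ℤ)) :=
      mem_I2 (hex_dist_le_two (w := (2,0)) (by decide) (by decide)) hy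
    -- overlap vertex (1,0) : contains (0,0), x, y
    have ho : 1 / ((I2 C ((1:ℤ),(0:ℤ))).ncard : ℝ) ≤ 1/3 :=
      inv_ncard_le_third (by decide) (by decide) (by decide) dc1 mx1 my4
    -- group A : (-1,0), (1,-1), (-1,-1) with x
    have hA := tri hh2 hh6 hh7
      (excl hC (by decide) (by decide) dc2 mx2 dc6 mx3)
      (excl hC (by decide) (by decide) dc2 mx2 dc7 mx4)
      (excl hC (by decide) (by decide) dc6 mx3 dc7 mx4)
    -- group B : (2,0), (1,1), (0,1) with y
    have hB := tri hh4 hh8 hh3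
      (excl hC (by decide) (by decide) dc4 my1 dc8 my2)
      (excl hC (by decide) (by decide) dc4 my1 dc3 my3)
      (excl hC (by decide) (by decide) dc8 my2 dc3 my3)
    linarith
  · -- x = (0,-1) ∈ C, y = (-2,1) ∈ C
    have mx1 : ((0:ℤ),(-1:ℤ)) ∈ I2 C ((1:ℤ),(0:ℤ)) :=
      mem_I2 (hex_dist_le_two (w := (1,-1)) (by decide) (by decide)) hx
    have mx2 : ((0:ℤ),(-1:ℤ)) ∈ I2 C ((-1:ℤ),(0:ℤ)) :=
      mem_I2 (hex_dist_le_two (w := (-1,-1)) (by decide) (by decide)) hx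
    have mx3 : ((0:ℤ),(-1:ℤ)) ∈ I2 C ((1:ℤ),(-1:ℤ)) :=
      mem_I2 ((hex_dist_le_one (by decide)).trans one_le_two) hx
    have mx4 : ((0:ℤ),(-1:ℤ)) ∈ I2 C ((-1:ℤ),(-1:ℤ)) :=
      mem_I2 ((hex_dist_le_one (by decide)).trans one_le_two) hx
    have my1 : ((-2:ℤ),(1:ℤ)) ∈ I2 C ((-2:ℤ),(0:ℤ)) :=
      mem_I2 ((hex_dist_le_one (by decide)).trans one_le_two) hy
    have my2 : ((-2:ℤ),(1:ℤ)) ∈ I2 C ((-1:ℤ),(1:ℤ)) :=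
      mem_I2 ((hex_dist_le_one (by decide)).trans one_le_two) hy
    have my3 : ((-2:ℤ),(1:ℤ)) ∈ I2 C ((0:ℤ),(1:ℤ)) :=
      mem_I2 (hex_dist_le_two (w := (-1,1)) (by decide) (by decide)) hy
    have my4 : ((-2:ℤ),(1:ℤ)) ∈ I2 C ((-1:ℤ),(0:ℤ)) :=
      mem_I2 (hex_dist_le_two (w := (-2,0)) (by decide) (by decide)) hy
    -- overlap vertex (-1,0)
    have ho : 1 / ((I2 C ((-1:ℤ),(0:ℤ))).ncard : ℝ) ≤ 1/3 :=
      inv_ncard_le_third (by decide) (by decide) (by decide) dc2 mx2 my4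
    -- group A : (1,0), (1,-1), (-1,-1) with x
    have hA := tri hh1 hh6 hh7
      (excl hC (by decide) (by decide) dc1 mx1 dc6 mx3)
      (excl hC (by decide) (by decide) dc1 mx1 dc7 mx4)
      (excl hC (by decide) (by decide) dc6 mx3 dc7 mx4)
    -- group B : (-2,0), (-1,1), (0,1) with y
    have hB := tri hh5 hh9 hh3
      (excl hC (by decide) (by decide) dc5 my1 dc9 my2)
      (excl hC (by decide) (by decide) dc5 my1 dc3 my3)
      (excl hC (by decide) (by decide) dc9 my2 dc3 my3)
    linarith
  · -- x = (-2,1) ∈ C, y = (2,1) ∈ C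
    have mx1 : ((-2:ℤ),(1:ℤ)) ∈ I2 C ((-2:ℤ),(0:ℤ)) :=
      mem_I2 ((hex_dist_le_one (by decide)).trans one_le_two) hy
    have mx2 : ((-2:ℤ),(1:ℤ)) ∈ I2 C ((-1:ℤ),(1:ℤ)) :=
      mem_I2 ((hex_dist_le_one (by decide)).trans one_le_two) hy
    have mx3 : ((-2:ℤ),(1:ℤ)) ∈ I2 C ((0:ℤ),(1:ℤ)) :=
      mem_I2 (hex_dist_le_two (w := (-1,1)) (by decide) (by decide)) hy
    have mx4 : ((-2:ℤ),(1:ℤ)) ∈ I2 C ((-1:ℤ),(0:ℤ)) :=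
      mem_I2 (hex_dist_le_two (w := (-2,0)) (by decide) (by decide)) hy
    have my1 : ((2:ℤ),(1:ℤ)) ∈ I2 C ((2:ℤ),(0:ℤ)) :=
      mem_I2 ((hex_dist_le_one (by decide)).trans one_le_two) hx
    have my2 : ((2:ℤ),(1:ℤ)) ∈ I2 C ((1:ℤ),(1:ℤ)) :=
      mem_I2 ((hex_dist_le_one (by decide)).trans one_le_two) hx
    have my3 : ((2:ℤ),(1:ℤ)) ∈ I2 C ((0:ℤ),(1:ℤ)) :=
      mem_I2 (hex_dist_le_two (w := (1,1)) (by decide) (by decide)) hx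
    have my4 : ((2:ℤ),(1:ℤ)) ∈ I2 C ((1:ℤ),(0:ℤ)) :=
      mem_I2 (hex_dist_le_two (w := (2,0)) (by decide) (by decide)) hx
    -- overlap vertex (0,1)
    have ho : 1 / ((I2 C ((0:ℤ),(1:ℤ))).ncard : ℝ) ≤ 1/3 :=
      inv_ncard_le_third (by decide) (by decide) (by decide) dc3 mx3 my3
    -- group A : (-2,0), (-1,1), (-1,0) with x
    have hA := tri hh5 hh9 hh2
      (excl hC (by decide) (by decide) dc5 mx1 dc9 mx2)
      (excl hC (by decide) (by decide) dc5 mx1 dc2 mx4)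
      (excl hC (by decide) (by decide) dc9 mx2 dc2 mx4)
    -- group B : (2,0), (1,1), (1,0) with y
    have hB := tri hh4 hh8 hh1
      (excl hC (by decide) (by decide) dc4 my1 dc8 my2)
      (excl hC (by decide) (by decide) dc4 my1 dc1 my4)
      (excl hC (by decide) (by decide) dc8 my2 dc1 my4)
    linarith
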